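/- arXiv:1511.03716 — 2 statements merged into one kernel-verified Lean document; each statement's English description precedes it below -/
import Mathlib

section
/- For every positive integer n, the number of solutions (x, y) ∈ ℤ² of n = x² + xy + y² equals 6·(#{d : d | n, d ≡ 1 (mod 3)} - #{d : d | n, d ≡ 2 (mod 3)}). -/
/-- Eisenstein-type integers `a + b·ζ` where `ζ = e^{iπ/3}`, so `ζ² = ζ - 1`.
The norm is `a² + ab + b²`. -/
@[ext] structure Eis : Type where
  re : ℤ
  im : ℤ
  deriving DecidableEq

namespace Eis

instance : Zero Eis := ⟨⟨0, 0⟩⟩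
instance : One Eis := ⟨⟨1, 0⟩⟩
instance : Add Eis := ⟨fun z w => ⟨z.re + w.re, z.im + w.im⟩⟩
instance : Neg Eis := ⟨fun z => ⟨-z.re, -z.im⟩⟩
instance : Sub Eis := ⟨fun z w => ⟨z.re - w.re, z.im - w.im⟩⟩
instance : Mul Eis := ⟨fun z w => ⟨z.re * w.re - z.im * w.im,
  z.re * w.im + z.im * w.re + z.im * w.im⟩⟩
instance : NatCast Eis := ⟨fun n => ⟨n, 0⟩⟩
instance : IntCast Eis := ⟨fun n => ⟨n, 0⟩⟩

@[simp] theorem zero_re : (0 : Eis).re = 0 := rfl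
@[simp] theorem zero_im : (0 : Eis).im = 0 := rfl
@[simp] theorem one_re : (1 : Eis).re = 1 := rfl
@[simp] theorem one_im : (1 : Eis).im = 0 := rfl
@[simp] theorem add_re (z w : Eis) : (z + w).re = z.re + w.re := rfl
@[simp] theorem add_im (z w : Eis) : (z + w).im = z.im + w.im := rfl
@[simp] theorem neg_re (z : Eis) : (-z).re = -z.re := rfl
@[simp] theorem neg_im (z : Eis) : (-z).im = -z.im := rfl
@[simp] theorem sub_re (z w : Eis) : (z - w).re = z.re - w.re := rfl
@[simp] theorem sub_im (z w : Eis) : (z - w).im = z.im - w.im := rfl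
@[simp] theorem mul_re (z w : Eis) : (z * w).re = z.re * w.re - z.im * w.im := rfl
@[simp] theorem mul_im (z w : Eis) :
    (z * w).im = z.re * w.im + z.im * w.re + z.im * w.im := rfl
@[simp] theorem natCast_re (n : ℕ) : (n : Eis).re = n := rfl
@[simp] theorem natCast_im (n : ℕ) : (n : Eis).im = 0 := rfl
@[simp] theorem intCast_re (n : ℤ) : (n : Eis).re = n := rfl
@[simp] theorem intCast_im (n : ℤ) : (n : Eis).im = 0 := rfl

instance commRing : CommRing Eis where
  add := (· + ·)
  zero := 0
  neg := Neg.neg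
  sub := Sub.sub
  mul := (· * ·)
  one := 1
  natCast := Nat.cast
  intCast := Int.cast
  add_assoc := by intros; ext <;> simp <;> ring
  zero_add := by intros; ext <;> simp
  add_zero := by intros; ext <;> simp
  add_comm := by intros; ext <;> simp <;> ring
  neg_add_cancel := by intros; ext <;> simp
  sub_eq_add_neg := by intros; ext <;> simp <;> ring
  mul_assoc := by intros; ext <;> simp <;> ring
  one_mul := by intros; ext <;> simp
  mul_one := by intros; ext <;> simp
  zero_mul := by intros; ext <;> simp
  mul_zero := by intros; ext <;> simp
  left_distrib := by intros; ext <;> simp <;> ring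
  right_distrib := by intros; ext <;> simp <;> ring
  mul_comm := by intros; ext <;> simp <;> ring
  natCast_zero := by ext <;> simp
  natCast_succ := by intros; ext <;> simp
  intCast_ofNat := by intros; ext <;> simp
  intCast_negSucc := by intros; ext <;> simp [Int.negSucc_eq] <;> push_cast <;> ring
  zsmul := zsmulRec
  nsmul := nsmulRec

instance : Nontrivial Eis := ⟨⟨0, 1, by decide⟩⟩

/-- The norm `a² + ab + b²`. -/
def norm (z : Eis) : ℤ := z.re * z.re + z.re * z.im + z.im * z.im

theorem norm_mul (z w : Eis) : (z * w).norm = z.norm * w.norm := by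
  simp [norm]; ring

@[simp] theorem norm_zero : (0 : Eis).norm = 0 := by simp [norm]
@[simp] theorem norm_one : (1 : Eis).norm = 1 := by simp [norm]

theorem norm_nonneg (z : Eis) : 0 ≤ z.norm := by
  have h1 := sq_nonneg (2 * z.re + z.im)
  have h2 := sq_nonneg z.im
  simp only [norm]; nlinarith

theorem norm_eq_zero_iff {z : Eis} : z.norm = 0 ↔ z = 0 := by
  constructor
  · intro h
    simp only [norm] at h
    have h2 : z.im = 0 := by nlinarith [sq_nonneg (2 * z.re + z.im), sq_nonneg z.im]
    have h3 : z.re = 0 := by nlinarith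
    ext <;> simp [h2, h3]
  · rintro rfl; simp

/-- Conjugation: `conj (a + bζ) = (a+b) - bζ`. -/
def conj (z : Eis) : Eis := ⟨z.re + z.im, -z.im⟩

@[simp] theorem conj_re (z : Eis) : (conj z).re = z.re + z.im := rfl
@[simp] theorem conj_im (z : Eis) : (conj z).im = -z.im := rfl

theorem conj_mul (z w : Eis) : conj (z * w) = conj z * conj w := by
  ext <;> simp [conj] <;> ring

@[simp] theorem conj_conj (z : Eis) : conj (conj z) = z := by ext <;> simp

@[simp] theorem norm_conj (z : Eis) : (conj z).norm = z.norm := by simp [norm]; ring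

theorem mul_conj (z : Eis) : z * conj z = (z.norm : Eis) := by
  ext <;> simp [norm] <;> ring

instance : NoZeroDivisors Eis := by
  constructor
  intro a b hab
  by_contra h
  push_neg at h
  have ha : a.norm ≠ 0 := fun hh => h.1 (norm_eq_zero_iff.mp hh)
  have hb : b.norm ≠ 0 := fun hh => h.2 (norm_eq_zero_iff.mp hh)
  have : (a * b).norm = 0 := by rw [hab]; simp
  rw [norm_mul] at this
  exact (mul_ne_zero ha hb) this

instance : IsDomain Eis := NoZeroDivisors.to_isDomain _

end Eis
namespace Eis

instance : Div Eis :=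
  ⟨fun x y => ⟨round (((x * conj y).re : ℚ) / (y.norm : ℚ)),
               round (((x * conj y).im : ℚ) / (y.norm : ℚ))⟩⟩

theorem div_def (x y : Eis) : x / y =
    ⟨round (((x * conj y).re : ℚ) / (y.norm : ℚ)),
     round (((x * conj y).im : ℚ) / (y.norm : ℚ))⟩ := rfl

instance : Mod Eis := ⟨fun x y => x - y * (x / y)⟩

theorem mod_def (x y : Eis) : x % y = x - y * (x / y) := rfl

/-- rounding error bound, integer version -/
theorem round_err (c m : ℤ) (hm : 0 < m) : 2 * |c - m * round ((c : ℚ) / m)| ≤ m := by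
  have hm' : (0 : ℚ) < (m : ℚ) := by exact_mod_cast hm
  have h := abs_sub_round ((c : ℚ) / m)
  have h2 : |(c : ℚ) - m * round ((c : ℚ) / m)| ≤ m / 2 := by
    have : (c : ℚ) - m * round ((c : ℚ) / m) = ((c : ℚ) / m - round ((c : ℚ) / m)) * m := by
      field_simp
    rw [this, abs_mul, abs_of_pos hm']
    calc |(c : ℚ) / m - round ((c : ℚ) / m)| * m ≤ (1/2) * m := by
          apply mul_le_mul_of_nonneg_right h (le_of_lt hm')
      _ = m / 2 := by ring
  have h3 : (2 : ℚ) * |(c : ℚ) - (m : ℚ) * (round ((c : ℚ) / m) : ℚ)| ≤ m := by linarith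
  have h4 : ((2 * |c - m * round ((c : ℚ) / m)| : ℤ) : ℚ) ≤ ((m : ℤ) : ℚ) := by
    push_cast
    rw [abs_sub_comm] at h3 ⊢
    convert h3 using 3 <;> push_cast <;> ring
  exact_mod_cast h4

theorem norm_mod_lt (x : Eis) {y : Eis} (hy : y ≠ 0) : (x % y).norm < y.norm := by
  have hm : 0 < y.norm := lt_of_le_of_ne (norm_nonneg y) (fun h => hy (norm_eq_zero_iff.mp h.symm))
  set m := y.norm with hmdef
  set c := x * conj y with hc
  set q := x / y with hq
  have he1 : 2 * |c.re - m * q.re| ≤ m := round_err c.re m hm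
  have he2 : 2 * |c.im - m * q.im| ≤ m := round_err c.im m hm
  -- (x % y) * conj y = c - m * q  (as Eis, m scalar)
  have key : (x % y) * conj y = c - (m : Eis) * q := by
    rw [mod_def]
    have : (m : Eis) = y * conj y := by rw [← mul_conj]
    rw [this, hq, hc]
    ring
  have hnorm : (x % y).norm * m = (c - (m : Eis) * q).norm := by
    rw [← key, norm_mul, norm_conj]
  set e1 := c.re - m * q.re with he1d
  set e2 := c.im - m * q.im with he2d
  have hsub : (c - (m : Eis) * q).norm = e1 * e1 + e1 * e2 + e2 * e2 := by
    simp [norm, he1d, he2d]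
  have habs1 : (2 * |e1|) * (2 * |e2|) ≤ m * m :=
    mul_le_mul he1 he2 (by positivity) (by linarith [abs_nonneg e1])
  have h4 : 4 * (e1 * e1 + e1 * e2 + e2 * e2) ≤ 3 * (m * m) := by
    have q1 : (2 * |e1|) * (2 * |e1|) ≤ m * m :=
      mul_le_mul he1 he1 (by positivity) (by linarith [abs_nonneg e1])
    have q2 : (2 * |e2|) * (2 * |e2|) ≤ m * m :=
      mul_le_mul he2 he2 (by positivity) (by linarith [abs_nonneg e2])
    have a1 : |e1| * |e1| = e1 * e1 := by rw [← abs_mul, abs_mul_self]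
    have a2 : |e2| * |e2| = e2 * e2 := by rw [← abs_mul, abs_mul_self]
    have a3 : e1 * e2 ≤ |e1| * |e2| := by rw [← abs_mul]; exact le_abs_self _
    nlinarith
  have hlt : (x % y).norm * m < m * m := by
    rw [hnorm, hsub]
    nlinarith
  exact lt_of_mul_lt_mul_right hlt (le_of_lt hm)

theorem natAbs_norm_mod_lt (x : Eis) {y : Eis} (hy : y ≠ 0) :
    (x % y).norm.natAbs < y.norm.natAbs := by
  have := norm_mod_lt x hy
  have h1 := norm_nonneg (x % y)
  have h2 := norm_nonneg y
  omega

theorem norm_le_norm_mul_left (x : Eis) {y : Eis} (hy : y ≠ 0) :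
    x.norm.natAbs ≤ ((x * y).norm).natAbs := by
  rw [norm_mul, Int.natAbs_mul]
  have : 1 ≤ y.norm.natAbs := by
    have h2 := norm_nonneg y
    have : y.norm ≠ 0 := fun h => hy (norm_eq_zero_iff.mp h)
    omega
  exact Nat.le_mul_of_pos_right _ (by omega)

instance : EuclideanDomain Eis :=
  { Eis.commRing, (inferInstance : Nontrivial Eis) with
    quotient := (· / ·)
    remainder := (· % ·)
    quotient_zero := fun x => by
      ext <;> simp [div_def] <;> norm_num
    quotient_mul_add_remainder_eq := fun x y => by
      show y * (x / y) + x % y = x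
      rw [mod_def]; ring
    r := fun a b => a.norm.natAbs < b.norm.natAbs
    r_wellFounded := (measure fun z : Eis => z.norm.natAbs).wf
    remainder_lt := fun x y hy => natAbs_norm_mod_lt x hy
    mul_left_not_lt := fun a b hb0 => not_lt_of_ge <| norm_le_norm_mul_left a hb0 }

end Eis
namespace Eis

theorem isUnit_iff {z : Eis} : IsUnit z ↔ z.norm = 1 := by
  constructor
  · rintro ⟨u, rfl⟩
    have h1 : ((u : Eis) * ((u⁻¹ : Eisˣ) : Eis)).norm = 1 := by
      rw [Units.mul_inv]; simp
    rw [norm_mul] at h1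
    have h2 := norm_nonneg (u : Eis)
    have h4 : (u : Eis).norm.natAbs * ((u⁻¹ : Eisˣ) : Eis).norm.natAbs = 1 := by
      rw [← Int.natAbs_mul, h1]; rfl
    have h5 := Nat.eq_one_of_mul_eq_one_right h4
    omega
  · intro h
    exact IsUnit.of_mul_eq_one (conj z) (by rw [mul_conj, h]; exact Int.cast_one)

theorem intCast_dvd_iff (t : ℤ) (z : Eis) : (t : Eis) ∣ z ↔ t ∣ z.re ∧ t ∣ z.im := by
  constructor
  · rintro ⟨w, rfl⟩
    constructor
    · exact ⟨w.re, by simp⟩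
    · exact ⟨w.im, by simp⟩
  · rintro ⟨⟨u, hu⟩, ⟨v, hv⟩⟩
    exact ⟨⟨u, v⟩, by ext <;> simp [hu, hv]⟩

theorem conj_dvd {z w : Eis} (h : z ∣ w) : conj z ∣ conj w := by
  obtain ⟨t, rfl⟩ := h
  exact ⟨conj t, by rw [conj_mul]⟩

theorem norm_dvd_norm {z w : Eis} (h : z ∣ w) : z.norm ∣ w.norm := by
  obtain ⟨t, rfl⟩ := h
  exact ⟨t.norm, norm_mul z t⟩

theorem prime_of_norm_prime {z : Eis} {p : ℕ} (hp : p.Prime) (h : z.norm = p) : Prime z := by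
  have hirr : Irreducible z := by
    constructor
    · intro hu
      rw [isUnit_iff, h] at hu
      exact hp.one_lt.ne' (by exact_mod_cast hu)
    · intro a b hab
      have hnn : a.norm * b.norm = (p : ℤ) := by rw [← norm_mul, ← hab, h]
      have ha := norm_nonneg a
      have hb := norm_nonneg b
      have hdvd : a.norm.natAbs ∣ p := by
        have : a.norm ∣ (p : ℤ) := Dvd.intro _ hnn
        exact Int.natAbs_dvd_natAbs.mpr (by simpa using this)
      rcases (Nat.Prime.eq_one_or_self_of_dvd hp _ hdvd) with h1 | h1
      · left
        rw [isUnit_iff]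
        omega
      · right
        rw [isUnit_iff]
        have hap : a.norm = p := by omega
        rw [hap] at hnn
        have hp0 : (p : ℤ) ≠ 0 := by exact_mod_cast hp.ne_zero
        exact mul_left_cancel₀ hp0 (by rw [mul_one]; exact hnn)
  exact (irreducible_iff_prime).mp hirr

/-- If `u² + u + 1 = 0` in `ZMod p` then `p = 3` or `p % 3 = 1`. -/
theorem mod3_of_root {p : ℕ} (hp : p.Prime) (u : ZMod p) (hu : u * u + u + 1 = 0) :
    p = 3 ∨ p % 3 = 1 := by
  haveI : Fact p.Prime := ⟨hp⟩
  by_cases h1 : u = 1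
  · left
    subst h1
    have : ((3 : ℕ) : ZMod p) = 0 := by push_cast; linear_combination hu
    have h3 : p ∣ 3 := (ZMod.natCast_eq_zero_iff 3 p).mp this
    exact ((Nat.prime_dvd_prime_iff_eq hp Nat.prime_three).mp h3)
  · right
    have hu3 : u ^ 3 = 1 := by linear_combination (u - 1) * hu
    have hunit : IsUnit u := by
      apply IsUnit.of_mul_eq_one (u * u)
      linear_combination (u - 1) * hu
    set U := hunit.unit with hU
    have hUcoe : (U : ZMod p) = u := rfl
    have hU3 : U ^ 3 = 1 := by
      ext
      push_cast [hUcoe]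
      exact hu3
    have hUne : U ≠ 1 := fun hh => h1 (by rw [← hUcoe, hh]; rfl)
    have hord : orderOf U = 3 := by
      have hdvd : orderOf U ∣ 3 := orderOf_dvd_of_pow_eq_one hU3
      rcases (Nat.Prime.eq_one_or_self_of_dvd Nat.prime_three _ hdvd) with h | h
      · exact absurd (orderOf_eq_one_iff.mp h) hUne
      · exact h
    have hcard : orderOf U ∣ p - 1 := by
      have := orderOf_dvd_card (G := (ZMod p)ˣ) (x := U)
      rwa [ZMod.card_units_eq_totient, Nat.totient_prime hp] at this
    rw [hord] at hcard
    have := hp.two_le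
    omega

/-- If `p % 3 = 1` then `x² + x + 1 = 0` has a root mod `p`. -/
theorem exists_root {p : ℕ} (hp : p.Prime) (h3 : p % 3 = 1) :
    ∃ u : ZMod p, u * u + u + 1 = 0 := by
  haveI : Fact p.Prime := ⟨hp⟩
  obtain ⟨g, hg⟩ := IsCyclic.exists_ofOrder_eq_natCard (α := (ZMod p)ˣ)
  have hcard : Nat.card (ZMod p)ˣ = p - 1 := by
    rw [Nat.card_eq_fintype_card, ZMod.card_units_eq_totient, Nat.totient_prime hp]
  rw [hcard] at hg
  have hp2 := hp.two_le
  set k := (p - 1) / 3 with hk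
  have hk3 : p - 1 = 3 * k := by omega
  have hkpos : 0 < k := by
    have : p ≠ 2 ∧ p ≠ 3 := by constructor <;> rintro rfl <;> simp at h3
    omega
  have hordU : orderOf (g ^ k) = 3 := by
    rw [orderOf_pow, hg, hk3]
    rw [show Nat.gcd (3 * k) k = k from Nat.gcd_eq_right ⟨3, by ring⟩]
    have h30 : 3 * k / k = 3 * k / (1 * k) := by rw [one_mul]
    rw [h30, Nat.mul_div_mul_right 3 1 hkpos]
  set U := g ^ k with hUdef
  have hU3 : U ^ 3 = 1 := by rw [← hordU]; exact pow_orderOf_eq_one U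
  have hUne : U ≠ 1 := by
    intro hh
    rw [hh, orderOf_one] at hordU
    omega
  refine ⟨(U : ZMod p), ?_⟩
  have hu3 : ((U : ZMod p)) ^ 3 = 1 := by
    have := congrArg (Units.val) hU3
    push_cast at this
    exact this
  have hune : (U : ZMod p) ≠ 1 := fun hh => hUne (Units.ext hh)
  have hfac : ((U : ZMod p) - 1) * ((U : ZMod p) * (U : ZMod p) + (U : ZMod p) + 1) = 0 := by
    linear_combination hu3
  rcases mul_eq_zero.mp hfac with h | h
  · exact absurd (sub_eq_zero.mp h) hune
  · exact h

end Eis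
namespace Eis

theorem natCast_eis (p : ℕ) : ((p : ℕ) : Eis) = (((p : ℕ) : ℤ) : Eis) := by ext <;> simp

theorem norm_natCast (p : ℕ) : ((p : ℕ) : Eis).norm = (p : ℤ) * (p : ℤ) := by simp [norm]

theorem norm_intCast (t : ℤ) : ((t : ℤ) : Eis).norm = t * t := by simp [norm]

theorem norm_eq_prime_of_factor {p : ℕ} (hp : p.Prime) {a b : Eis}
    (hab : a * b = ((p : ℕ) : Eis)) (ha : ¬IsUnit a) (hb : ¬IsUnit b) : a.norm = p := by
  have hnn : a.norm * b.norm = (p : ℤ) * (p : ℤ) := by rw [← norm_mul, hab, norm_natCast]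
  have ha0 := norm_nonneg a
  have hb0 := norm_nonneg b
  rw [isUnit_iff] at ha hb
  have hnat : a.norm.natAbs * b.norm.natAbs = p ^ 2 := by
    have := congrArg Int.natAbs hnn
    rw [Int.natAbs_mul] at this
    rw [this]
    simp [Int.natAbs_mul, pow_two]
  have hdvd : a.norm.natAbs ∣ p ^ 2 := Dvd.intro _ hnat
  obtain ⟨i, hi, hmi⟩ := (Nat.dvd_prime_pow hp).mp hdvd
  interval_cases i
  · exfalso; apply ha; simp at hmi; omega
  · simp at hmi; omega
  · exfalso
    apply hb
    rw [hmi] at hnat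
    have hbn : b.norm.natAbs = 1 :=
      (Nat.mul_eq_left (pow_pos hp.pos 2).ne').mp hnat
    omega

theorem exists_norm_eq_prime {p : ℕ} (hp : p.Prime) (h3 : p % 3 = 1) :
    ∃ π : Eis, π.norm = p := by
  haveI : Fact p.Prime := ⟨hp⟩
  obtain ⟨u, hu⟩ := exists_root hp h3
  set a := u.val with hadef
  have hcast : ((a : ℕ) : ZMod p) = u := ZMod.natCast_rightInverse u
  have hdvd : p ∣ a * a + a + 1 := by
    rw [← ZMod.natCast_eq_zero_iff]
    push_cast
    rw [hcast, hu]
  set z₀ : Eis := ⟨(a : ℤ), 1⟩ with hz₀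
  have hnz₀ : z₀.norm = ((a * a + a + 1 : ℕ) : ℤ) := by
    simp only [norm, hz₀]; push_cast; ring
  have hpz : ((p : ℕ) : Eis) ∣ z₀ * conj z₀ := by
    rw [mul_conj, hnz₀, natCast_eis]
    exact map_dvd (Int.castRingHom Eis) (Int.natCast_dvd_natCast.mpr hdvd)
  by_cases hprime : Prime ((p : ℕ) : Eis)
  · exfalso
    rcases hprime.2.2 _ _ hpz with h | h
    · rw [natCast_eis, intCast_dvd_iff] at h
      have : (p : ℤ) ∣ 1 := by simpa [hz₀] using h.2
      have := Int.le_of_dvd one_pos this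
      have := hp.two_le
      omega
    · rw [natCast_eis, intCast_dvd_iff] at h
      have h2 : (p : ℤ) ∣ -1 := by simpa [hz₀] using h.2
      have : (p : ℤ) ∣ 1 := (dvd_neg).mp h2
      have := Int.le_of_dvd one_pos this
      have := hp.two_le
      omega
  · have hnu : ¬IsUnit ((p : ℕ) : Eis) := by
      rw [isUnit_iff, norm_natCast]
      have := hp.two_le
      intro hh
      have : (p : ℤ) * p ≥ 2 * 2 := by
        apply mul_le_mul <;> omega
      omega
    have hni : ¬Irreducible ((p : ℕ) : Eis) := fun hirr =>
      hprime ((irreducible_iff_prime).mp hirr)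
    rw [irreducible_iff] at hni
    push_neg at hni
    obtain ⟨x, y, hxy, hx, hy⟩ := hni hnu
    exact ⟨x, norm_eq_prime_of_factor hp hxy.symm hx hy⟩

theorem norm_ne_prime_two_mod3 {p : ℕ} (hp : p.Prime) (h3 : p % 3 = 2) (z : Eis) :
    z.norm ≠ p := by
  intro h
  set a := z.re
  set b := z.im
  have key : (2 * a + b) ^ 2 + 3 * b ^ 2 = 4 * p := by
    simp only [norm] at h
    linear_combination 4 * h
  by_cases hp2 : p = 2
  · subst hp2
    have h4 : ∀ x y : ZMod 4, x * x + x * y + y * y ≠ 2 := by decide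
    apply h4 (a : ZMod 4) (b : ZMod 4)
    have h' := h
    simp only [norm] at h'
    have hc4 := congrArg (fun t : ℤ => (t : ZMod 4)) h'
    push_cast at hc4
    linear_combination hc4
  haveI : Fact p.Prime := ⟨hp⟩
  by_cases hpb : (p : ℤ) ∣ b
  · have h1 : (p : ℤ) ∣ (2 * a + b) ^ 2 := by
      obtain ⟨c, hc⟩ := hpb
      exact ⟨4 - 3 * p * c ^ 2, by linear_combination key - 3 * (b + p * c) * hc⟩
    have hpZ : Prime ((p : ℕ) : ℤ) := Int.prime_iff_natAbs_prime.mpr (by simpa using hp)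
    have h2 : (p : ℤ) ∣ 2 * a + b := hpZ.dvd_of_dvd_pow h1
    obtain ⟨s, hs⟩ := h2
    obtain ⟨c, hc⟩ := hpb
    have h4 : (p : ℤ) * (p * s ^ 2 + 3 * p * c ^ 2) = (p : ℤ) * 4 := by
      linear_combination key - (2 * a + b + p * s) * hs - 3 * (b + p * c) * hc
    have hp0 : (p : ℤ) ≠ 0 := by exact_mod_cast hp.ne_zero
    have h5 : (p : ℤ) * s ^ 2 + 3 * (p : ℤ) * c ^ 2 = 4 := mul_left_cancel₀ hp0 h4
    have h6 : (p : ℤ) ∣ 4 := ⟨s ^ 2 + 3 * c ^ 2, by linear_combination -h5⟩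
    have h7 : p ∣ 4 := by exact_mod_cast h6
    have := hp.two_le
    have hle4 : p ≤ 4 := Nat.le_of_dvd (by norm_num) h7
    interval_cases p
    · omega
    · omega
    · exact absurd hp (by norm_num)
  · -- p odd, b invertible
    set K := ZMod p
    have hb0 : (b : K) ≠ 0 := fun hh => hpb ((ZMod.intCast_zmod_eq_zero_iff_dvd b p).mp hh)
    have hk : (2 * (a : K) + (b : K)) ^ 2 + 3 * ((b : K)) ^ 2 = 0 := by
      have hcst := congrArg (fun t : ℤ => (t : K)) key
      push_cast [K] at hcst
      rw [ZMod.natCast_self] at hcst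
      linear_combination hcst
    set v : K := (2 * (a : K) + (b : K)) * ((b : K))⁻¹ with hv
    have hv2 : v ^ 2 = -3 := by
      rw [hv, mul_pow]
      have hsq : (2 * (a : K) + (b : K)) ^ 2 = -3 * ((b : K)) ^ 2 := by linear_combination hk
      rw [hsq]
      rw [mul_assoc, ← mul_pow, mul_inv_cancel₀ hb0, one_pow, mul_one]
    have h20 : (2 : K) ≠ 0 := by
      intro hh
      have : ((2 : ℕ) : K) = 0 := by push_cast; exact hh
      have := (ZMod.natCast_eq_zero_iff 2 p).mp this
      have := (Nat.prime_dvd_prime_iff_eq hp Nat.prime_two).mp this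
      exact hp2 this
    set u : K := (v - 1) * (2 : K)⁻¹ with hudef
    have h2u : 2 * u = v - 1 := by
      rw [hudef]
      rw [mul_comm, mul_assoc, inv_mul_cancel₀ h20, mul_one]
    have hu : u * u + u + 1 = 0 := by
      have h40 : (4 : K) ≠ 0 := by
        intro hh
        apply h20
        have : (2 : K) * 2 = 0 := by rw [← hh]; norm_num
        rcases mul_eq_zero.mp this with h | h <;> exact h
      have : (4 : K) * (u * u + u + 1) = 0 := by
        have expand : (4 : K) * (u * u + u + 1) = (2 * u) ^ 2 + 2 * (2 * u) + 4 := by ring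
        rw [expand, h2u]
        linear_combination hv2
      rcases mul_eq_zero.mp this with h | h
      · exact absurd h h40
      · exact h
    rcases mod3_of_root hp u hu with h | h
    · subst h; omega
    · omega

theorem prime_natCast_of_two_mod3 {p : ℕ} (hp : p.Prime) (h3 : p % 3 = 2) :
    Prime ((p : ℕ) : Eis) := by
  have hirr : Irreducible ((p : ℕ) : Eis) := by
    constructor
    · rw [isUnit_iff, norm_natCast]
      have := hp.two_le
      intro hh
      have : (p : ℤ) * p ≥ 2 * 2 := by apply mul_le_mul <;> omega
      omega
    · intro x y hxy
      by_contra hcon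
      push_neg at hcon
      exact norm_ne_prime_two_mod3 hp h3 x
        (norm_eq_prime_of_factor hp hxy.symm hcon.1 hcon.2)
  exact (irreducible_iff_prime).mp hirr

theorem not_dvd_conj {p : ℕ} (hp : p.Prime) (h3 : p % 3 = 1) {π : Eis}
    (hπ : π.norm = p) : ¬ π ∣ conj π := by
  intro hdvd
  set a := π.re
  set b := π.im
  have key : (2 * a + b) ^ 2 + 3 * b ^ 2 = 4 * p := by
    have h := hπ
    simp only [norm] at h
    linear_combination 4 * h
  have hsum : π ∣ ((2 * a + b : ℤ) : Eis) := by
    have heq : ((2 * a + b : ℤ) : Eis) = π + conj π := by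
      ext <;> simp only [intCast_re, intCast_im, add_re, add_im, conj_re, conj_im] <;> ring
    rw [heq]
    exact dvd_add dvd_rfl hdvd
  have hnd : (p : ℤ) ∣ (2 * a + b) * (2 * a + b) := by
    have := norm_dvd_norm hsum
    rwa [hπ, norm_intCast] at this
  have hpd : (p : ℤ) ∣ 2 * a + b := by
    have : (p : ℤ) ∣ (2 * a + b) ^ 2 := by rwa [pow_two]
    exact (Int.prime_iff_natAbs_prime.mpr (by simpa using hp)).dvd_of_dvd_pow this
  by_cases ht : 2 * a + b = 0
  · rw [ht] at key
    have h34 : (3 : ℤ) ∣ 4 * p := ⟨b ^ 2, by linarith⟩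
    have h3p : (3 : ℤ) ∣ (p : ℤ) := by
      rcases (Int.prime_three.dvd_mul.mp h34) with h | h
      · norm_num at h
      · exact h
    have : (3 : ℕ) ∣ p := by exact_mod_cast h3p
    have := (Nat.prime_dvd_prime_iff_eq Nat.prime_three hp).mp this
    omega
  · obtain ⟨s, hs⟩ := hpd
    have hs0 : s ≠ 0 := by rintro rfl; simp at hs; exact ht hs
    have hs1 : 1 ≤ s ^ 2 := by
      have habs : 1 ≤ |s| := Int.one_le_abs hs0
      nlinarith [sq_abs s]
    have hpp : ((p : ℤ)) ^ 2 ≤ (2 * a + b) ^ 2 := by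
      rw [hs]
      have : 0 ≤ ((p : ℤ)) ^ 2 := sq_nonneg _
      nlinarith [mul_nonneg this (sub_nonneg.mpr hs1)]
    have hb2 : 0 ≤ 3 * b ^ 2 := by positivity
    have hple : ((p : ℤ)) ^ 2 ≤ 4 * p := by linarith
    have hp4 : p ≤ 4 := by
      by_contra hcon
      push_neg at hcon
      have : (5 : ℤ) ≤ p := by exact_mod_cast hcon
      nlinarith
    have := hp.two_le
    interval_cases p
    · omega
    · omega
    · exact absurd hp (by norm_num)

theorem lam_norm : (⟨1, 1⟩ : Eis).norm = 3 := rfl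

theorem lam_prime : Prime (⟨1, 1⟩ : Eis) :=
  prime_of_norm_prime (by norm_num) lam_norm

theorem lam_dvd_conj : (⟨1, 1⟩ : Eis) ∣ conj ⟨1, 1⟩ :=
  ⟨⟨1, -1⟩, by ext <;> simp [conj]⟩

theorem lam_dvd_of_dvd_norm {z : Eis} (h : (3 : ℤ) ∣ z.norm) : (⟨1, 1⟩ : Eis) ∣ z := by
  have h3 : (⟨1, 1⟩ : Eis) * conj ⟨1, 1⟩ = ((3 : ℤ) : Eis) := by
    rw [mul_conj, lam_norm]
  have hd : (⟨1, 1⟩ : Eis) ∣ (z.norm : Eis) := by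
    obtain ⟨c, hc⟩ := h
    refine ⟨conj ⟨1, 1⟩ * ((c : ℤ) : Eis), ?_⟩
    rw [← mul_assoc, h3, ← Int.cast_mul, hc]
  rw [← mul_conj] at hd
  rcases lam_prime.2.2 _ _ hd with h | h
  · exact h
  · have := conj_dvd h
    rw [conj_conj] at this
    exact dvd_trans lam_dvd_conj this

theorem inert_dvd_of_dvd_norm {p : ℕ} (hp : p.Prime) (h3 : p % 3 = 2) {z : Eis}
    (h : (p : ℤ) ∣ z.norm) : ((p : ℕ) : Eis) ∣ z := by
  have hd : ((p : ℕ) : Eis) ∣ (z.norm : Eis) := by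
    rw [natCast_eis]
    exact map_dvd (Int.castRingHom Eis) h
  rw [← mul_conj] at hd
  rcases (prime_natCast_of_two_mod3 hp h3).2.2 _ _ hd with h | h
  · exact h
  · have := conj_dvd h
    rw [conj_conj] at this
    have hcp : conj ((p : ℕ) : Eis) = ((p : ℕ) : Eis) := by ext <;> simp
    rwa [hcp] at this

end Eis
namespace Eis

theorem norm_pow (z : Eis) (n : ℕ) : (z ^ n).norm = z.norm ^ n := by
  induction n with
  | zero => simp
  | succ k ih => rw [pow_succ, norm_mul, ih, pow_succ]

/-- Number of Eisenstein integers of norm `n`. -/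
noncomputable def A (n : ℕ) : ℕ := Nat.card {z : Eis // z.norm = (n : ℤ)}

theorem A_one : A 1 = 6 := by
  have hiff : ∀ z : Eis, z.norm = ((1 : ℕ) : ℤ) ↔
      z ∈ ({⟨1,0⟩, ⟨-1,0⟩, ⟨0,1⟩, ⟨0,-1⟩, ⟨1,-1⟩, ⟨-1,1⟩} : Finset Eis) := by
    intro z
    constructor
    · intro h
      have h1 : z.re * z.re + z.re * z.im + z.im * z.im = 1 := by
        simp only [norm] at h; push_cast at h; linarith
      have hb2 : z.im * z.im ≤ 1 := by nlinarith [sq_nonneg (2 * z.re + z.im)]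
      have hbr : -1 ≤ z.im ∧ z.im ≤ 1 := by constructor <;> nlinarith
      simp only [Finset.mem_insert, Finset.mem_singleton]
      have hcases : z.im = -1 ∨ z.im = 0 ∨ z.im = 1 := by omega
      have hext : ∀ x y : ℤ, z.re = x → z.im = y → z = (⟨x, y⟩ : Eis) := by
        intro x y hx hy; ext <;> simp [hx, hy]
      rcases hcases with hc | hc | hc
      · rw [hc] at h1
        have h2 : z.re * (z.re - 1) = 0 := by linarith
        rcases mul_eq_zero.mp h2 with h' | h'
        · exact Or.inr (Or.inr (Or.inr (Or.inl (hext 0 (-1) h' hc))))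
        · exact Or.inr (Or.inr (Or.inr (Or.inr (Or.inl (hext 1 (-1) (by linarith) hc)))))
      · rw [hc] at h1
        have h2 : (z.re - 1) * (z.re + 1) = 0 := by linarith
        rcases mul_eq_zero.mp h2 with h' | h'
        · exact Or.inl (hext 1 0 (by linarith) hc)
        · exact Or.inr (Or.inl (hext (-1) 0 (by linarith) hc))
      · rw [hc] at h1
        have h2 : z.re * (z.re + 1) = 0 := by linarith
        rcases mul_eq_zero.mp h2 with h' | h'
        · exact Or.inr (Or.inr (Or.inl (hext 0 1 h' hc)))
        · exact Or.inr (Or.inr (Or.inr (Or.inr (Or.inr (hext (-1) 1 (by linarith) hc)))))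
    · intro h
      simp only [Finset.mem_insert, Finset.mem_singleton] at h
      rcases h with rfl | rfl | rfl | rfl | rfl | rfl <;> rfl
  have hequiv := Equiv.subtypeEquivRight hiff
  rw [A, Nat.card_congr hequiv]
  rw [Nat.card_eq_finsetCard]
  decide

theorem A_eq_of_dvd {w : Eis} {k m : ℕ} (hk : w.norm = (k : ℤ)) (hk0 : k ≠ 0)
    (hdvd : ∀ z : Eis, z.norm = ((k * m : ℕ) : ℤ) → w ∣ z) : A (k * m) = A m := by
  have hw0 : w ≠ 0 := by
    intro h
    rw [h, norm_zero] at hk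
    exact hk0 (by exact_mod_cast hk.symm)
  have hbij : Function.Bijective (fun z : {z : Eis // z.norm = (m : ℤ)} =>
      (⟨w * z.1, by rw [norm_mul, hk, z.2]; push_cast; ring⟩ :
        {z : Eis // z.norm = ((k * m : ℕ) : ℤ)})) := by
    constructor
    · intro x y hxy
      simp only [Subtype.mk.injEq] at hxy
      exact Subtype.ext (mul_left_cancel₀ hw0 hxy)
    · intro z
      obtain ⟨t, ht⟩ := hdvd z.1 z.2
      have hz2 := z.2
      rw [ht, norm_mul, hk] at hz2
      have hkz : (k : ℤ) ≠ 0 := by exact_mod_cast hk0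
      have hnt : t.norm = (m : ℤ) := by
        apply mul_left_cancel₀ hkz
        push_cast at hz2 ⊢
        linarith
      exact ⟨⟨t, hnt⟩, Subtype.ext ht.symm⟩
  exact ((Nat.card_congr (Equiv.ofBijective _ hbij))).symm

theorem ramified_dvd : ∀ (v m : ℕ) (z : Eis), z.norm = ((3 ^ v * m : ℕ) : ℤ) →
    (⟨1, 1⟩ : Eis) ^ v ∣ z := by
  intro v
  induction v with
  | zero => intro m z _; exact one_dvd z
  | succ v ih =>
    intro m z hz
    have h3 : (3 : ℤ) ∣ z.norm := by
      rw [hz]; exact ⟨((3 ^ v * m : ℕ) : ℤ), by push_cast; ring⟩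
    obtain ⟨t, ht⟩ := lam_dvd_of_dvd_norm h3
    have hnt : t.norm = ((3 ^ v * m : ℕ) : ℤ) := by
      have := hz
      rw [ht, norm_mul, lam_norm] at this
      apply mul_left_cancel₀ (show (3 : ℤ) ≠ 0 by norm_num)
      push_cast at this ⊢
      rw [pow_succ] at this
      linarith
    rw [ht, pow_succ, mul_comm ((⟨1,1⟩ : Eis) ^ v)]
    exact mul_dvd_mul_left _ (ih m t hnt)

theorem A_ramified (v m : ℕ) (hm : m ≠ 0) : A (3 ^ v * m) = A m := by
  apply A_eq_of_dvd (w := (⟨1, 1⟩ : Eis) ^ v)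
  · rw [norm_pow, lam_norm]; push_cast; ring
  · positivity
  · intro z hz; exact ramified_dvd v m z hz

theorem inert_descent {p : ℕ} (hp : p.Prime) (h3 : p % 3 = 2) : ∀ (v m : ℕ) (z : Eis), ¬ p ∣ m →
    z.norm = ((p ^ v * m : ℕ) : ℤ) → ∃ k, v = 2 * k ∧ ((p : ℕ) : Eis) ^ k ∣ z := by
  intro v
  induction v using Nat.strong_induction_on with
  | _ v ih =>
    intro m z hm hz
    match v, ih with
    | 0, _ => exact ⟨0, rfl, one_dvd z⟩
    | 1, _ =>
      exfalso
      have hdz : ((p : ℕ) : Eis) ∣ z := by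
        apply inert_dvd_of_dvd_norm hp h3
        rw [hz]; exact ⟨(m : ℤ), by push_cast; ring⟩
      obtain ⟨t, ht⟩ := hdz
      rw [ht, norm_mul, norm_natCast] at hz
      have hpz : (p : ℤ) ≠ 0 := by exact_mod_cast hp.ne_zero
      have : (p : ℤ) * t.norm = (m : ℤ) := by
        apply mul_left_cancel₀ hpz
        push_cast at hz ⊢
        linarith
      apply hm
      have : (p : ℤ) ∣ (m : ℤ) := ⟨t.norm, this.symm⟩
      exact_mod_cast this
    | (v + 2), ih =>
      have hdz : ((p : ℕ) : Eis) ∣ z := by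
        apply inert_dvd_of_dvd_norm hp h3
        rw [hz]; exact ⟨((p ^ (v+1) * m : ℕ) : ℤ), by push_cast; ring⟩
      obtain ⟨t, ht⟩ := hdz
      rw [ht, norm_mul, norm_natCast] at hz
      have hpz : (p : ℤ) ≠ 0 := by exact_mod_cast hp.ne_zero
      have hnt : t.norm = ((p ^ v * m : ℕ) : ℤ) := by
        apply mul_left_cancel₀ hpz
        apply mul_left_cancel₀ hpz
        push_cast at hz ⊢
        ring_nf at hz ⊢
        linarith
      obtain ⟨k, hk, hdvd⟩ := ih v (by omega) m t hm hnt
      refine ⟨k + 1, by omega, ?_⟩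
      rw [ht, pow_succ, mul_comm (((p : ℕ) : Eis) ^ k)]
      exact mul_dvd_mul_left _ hdvd

theorem A_inert_even {p : ℕ} (hp : p.Prime) (h3 : p % 3 = 2) (k m : ℕ) (hm : ¬ p ∣ m) : A (p ^ (2 * k) * m) = A m := by
  apply A_eq_of_dvd (w := ((p : ℕ) : Eis) ^ k)
  · rw [norm_pow, norm_natCast]; push_cast; ring
  · exact pow_ne_zero _ hp.ne_zero
  · intro z hz
    obtain ⟨k', hk', hdvd⟩ := inert_descent hp h3 (2 * k) m z hm hz
    have : k' = k := by omega
    rwa [this] at hdvd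

theorem A_inert_odd {p : ℕ} (hp : p.Prime) (h3 : p % 3 = 2) (v m : ℕ) (hv : Odd v) (hm : ¬ p ∣ m) : A (p ^ v * m) = 0 := by
  have hempty : IsEmpty {z : Eis // z.norm = ((p ^ v * m : ℕ) : ℤ)} := by
    constructor
    rintro ⟨z, hz⟩
    obtain ⟨k, hk, _⟩ := inert_descent hp h3 v m z hm hz
    obtain ⟨j, hj⟩ := hv
    omega
  exact Nat.card_of_isEmpty

theorem split_decomp {p : ℕ} (hp : p.Prime) {π : Eis} (hπ : π.norm = (p : ℤ)) (m : ℕ) (hm : ¬ p ∣ m) : ∀ (v : ℕ) (z : Eis),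
    z.norm = ((p ^ v * m : ℕ) : ℤ) →
    ∃ i, i ≤ v ∧ ∃ w : Eis, w.norm = (m : ℤ) ∧ z = π ^ i * (conj π) ^ (v - i) * w := by
  have hπp : Prime π := prime_of_norm_prime hp hπ
  intro v
  induction v with
  | zero =>
    intro z hz
    exact ⟨0, le_refl 0, z, by simpa using hz, by simp⟩
  | succ v ih =>
    intro z hz
    have hpz : (p : ℤ) ≠ 0 := by exact_mod_cast hp.ne_zero
    have hdvd : π ∣ z * conj z := by
      rw [mul_conj]
      have h1 : π ∣ ((p : ℤ) : Eis) := ⟨conj π, by rw [mul_conj, hπ]⟩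
      have h2 : (p : ℤ) ∣ z.norm := by
        rw [hz]; exact ⟨((p ^ v * m : ℕ) : ℤ), by push_cast; ring⟩
      exact dvd_trans h1 (map_dvd (Int.castRingHom Eis) h2)
    rcases hπp.2.2 _ _ hdvd with h | h
    · obtain ⟨t, ht⟩ := h
      have hnt : t.norm = ((p ^ v * m : ℕ) : ℤ) := by
        apply mul_left_cancel₀ hpz
        have := hz
        rw [ht, norm_mul, hπ] at this
        push_cast at this ⊢
        rw [pow_succ'] at this
        linarith
      obtain ⟨i, hi, w, hw, hwt⟩ := ih t hnt
      refine ⟨i + 1, by omega, w, hw, ?_⟩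
      rw [ht, hwt, show v + 1 - (i + 1) = v - i from by omega]
      ring
    · have h' : conj π ∣ z := by
        have := conj_dvd h
        rwa [conj_conj] at this
      obtain ⟨t, ht⟩ := h'
      have hnt : t.norm = ((p ^ v * m : ℕ) : ℤ) := by
        apply mul_left_cancel₀ hpz
        have := hz
        rw [ht, norm_mul, norm_conj, hπ] at this
        push_cast at this ⊢
        rw [pow_succ'] at this
        linarith
      obtain ⟨i, hi, w, hw, hwt⟩ := ih t hnt
      refine ⟨i, by omega, w, hw, ?_⟩
      rw [ht, hwt, show v + 1 - i = (v - i) + 1 from by omega]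
      ring

theorem split_inj_aux {p : ℕ} (hp : p.Prime) {π : Eis} (hπ : π.norm = (p : ℤ))
    (hna : ¬ π ∣ conj π) (m : ℕ) (hm : ¬ p ∣ m) (v i j : ℕ) (hi : i ≤ v) (hj : j ≤ v)
    (hij : i ≤ j) (w w' : Eis) (hw : w.norm = (m : ℤ)) (hw' : w'.norm = (m : ℤ))
    (heq : π ^ i * (conj π) ^ (v - i) * w = π ^ j * (conj π) ^ (v - j) * w') :
    i = j ∧ w = w' := by
  have hπp : Prime π := prime_of_norm_prime hp hπ
  have hπ0 : π ≠ 0 := hπp.ne_zero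
  have hcπ0 : conj π ≠ 0 := by
    intro h
    have : (conj π).norm = 0 := by rw [h, norm_zero]
    rw [norm_conj, hπ] at this
    exact hp.ne_zero (by exact_mod_cast this)
  have hpj : π ^ j = π ^ i * π ^ (j - i) := by rw [← pow_add]; congr 1; omega
  have hkey : (conj π) ^ (v - i) * w = π ^ (j - i) * (conj π) ^ (v - j) * w' := by
    apply mul_left_cancel₀ (pow_ne_zero i hπ0)
    calc π ^ i * ((conj π) ^ (v - i) * w) = π ^ i * (conj π) ^ (v - i) * w := by ring
      _ = π ^ j * (conj π) ^ (v - j) * w' := heq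
      _ = π ^ i * (π ^ (j - i) * (conj π) ^ (v - j) * w') := by rw [hpj]; ring
  have hieqj : i = j := by
    by_contra hne
    have hlt : 0 < j - i := by omega
    have hπdvd : π ∣ (conj π) ^ (v - i) * w := by
      rw [hkey]
      exact dvd_mul_of_dvd_left (dvd_mul_of_dvd_left (dvd_pow_self π (by omega)) _) _
    rcases hπp.2.2 _ _ hπdvd with h | h
    · exact hna (hπp.dvd_of_dvd_pow h)
    · obtain ⟨t, ht⟩ := h
      apply hm
      have : (p : ℤ) ∣ (m : ℤ) := by
        rw [← hw, ht, norm_mul, hπ]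
        exact Dvd.intro _ rfl
      exact_mod_cast this
  subst hieqj
  refine ⟨rfl, ?_⟩
  have : π ^ (0 : ℕ) = (1 : Eis) := pow_zero π
  rw [show i - i = 0 from by omega, pow_zero, one_mul] at hkey
  exact mul_left_cancel₀ (pow_ne_zero _ hcπ0) hkey

theorem A_split {p : ℕ} (hp : p.Prime) {π : Eis} (hπ : π.norm = (p : ℤ))
    (hna : ¬ π ∣ conj π) (m : ℕ) (hm : ¬ p ∣ m) (v : ℕ) : A (p ^ v * m) = (v + 1) * A m := by
  have hπp : Prime π := prime_of_norm_prime hp hπ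
  have hF : ∀ (iw : Fin (v + 1) × {z : Eis // z.norm = (m : ℤ)}),
      (π ^ (iw.1 : ℕ) * (conj π) ^ (v - (iw.1 : ℕ)) * iw.2.1).norm
        = ((p ^ v * m : ℕ) : ℤ) := by
    rintro ⟨⟨i, hi⟩, ⟨w, hw⟩⟩
    simp only
    rw [norm_mul, norm_mul, norm_pow, norm_pow, norm_conj, hπ, hw]
    push_cast
    rw [← pow_add, show i + (v - i) = v from by omega]
  have hbij : Function.Bijective (fun iw : Fin (v + 1) × {z : Eis // z.norm = (m : ℤ)} =>
      (⟨π ^ (iw.1 : ℕ) * (conj π) ^ (v - (iw.1 : ℕ)) * iw.2.1, hF iw⟩ :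
        {z : Eis // z.norm = ((p ^ v * m : ℕ) : ℤ)})) := by
    constructor
    · rintro ⟨⟨i, hi⟩, ⟨w, hw⟩⟩ ⟨⟨j, hj⟩, ⟨w', hw'⟩⟩ hxy
      simp only [Subtype.mk.injEq] at hxy
      have hres : i = j ∧ w = w' := by
        rcases le_total i j with hij | hij
        · exact split_inj_aux hp hπ hna m hm v i j (by omega) (by omega) hij w w' hw hw' hxy
        · have := split_inj_aux hp hπ hna m hm v j i (by omega) (by omega) hij w' w hw' hw
            hxy.symm
          exact ⟨this.1.symm, this.2.symm⟩
      simp only [Prod.mk.injEq, Subtype.mk.injEq, Fin.mk.injEq]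
      exact hres
    · rintro ⟨z, hz⟩
      obtain ⟨i, hi, w, hw, hwt⟩ := split_decomp hp hπ m hm v z hz
      exact ⟨⟨⟨i, by omega⟩, ⟨w, hw⟩⟩, Subtype.ext hwt.symm⟩
  have := Nat.card_congr (Equiv.ofBijective _ hbij)
  rw [Nat.card_prod, Nat.card_eq_fintype_card, Fintype.card_fin] at this
  rw [A, ← this, A]

end Eis
namespace EisMain

open ArithmeticFunction Finset

/-- The nontrivial character mod 3 (as a function ℕ → ℤ). -/
def chi : ArithmeticFunction ℤ :=
  ⟨fun d => if d % 3 = 1 then 1 else if d % 3 = 2 then -1 else 0, rfl⟩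

theorem chi_apply (d : ℕ) :
    chi d = if d % 3 = 1 then 1 else if d % 3 = 2 then -1 else 0 := rfl

theorem chi_mul (a b : ℕ) : chi (a * b) = chi a * chi b := by
  rw [chi_apply, chi_apply, chi_apply, Nat.mul_mod]
  have ha : a % 3 = 0 ∨ a % 3 = 1 ∨ a % 3 = 2 := by omega
  have hb : b % 3 = 0 ∨ b % 3 = 1 ∨ b % 3 = 2 := by omega
  rcases ha with h1 | h1 | h1 <;> rcases hb with h2 | h2 | h2 <;>
    rw [h1, h2] <;> norm_num

theorem chi_mult : chi.IsMultiplicative :=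
  ⟨by rw [chi_apply]; norm_num, fun {m n} _ => chi_mul m n⟩

/-- `F n = ∑_{d ∣ n} χ(d)`. -/
def F : ArithmeticFunction ℤ := ↑zeta * chi

theorem F_apply (n : ℕ) : F n = ∑ d ∈ n.divisors, chi d := coe_zeta_mul_apply

theorem F_mult : F.IsMultiplicative := (isMultiplicative_zeta.natCast).mul chi_mult

theorem F_three_pow (v : ℕ) : F (3 ^ v) = 1 := by
  rw [F_apply, Nat.sum_divisors_prime_pow Nat.prime_three]
  rw [Finset.sum_eq_single_of_mem 0 (Finset.mem_range.mpr (by omega))]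
  · simp [chi_apply]
  · intro i _ hi
    rw [chi_apply]
    have h0 : 3 ^ i % 3 = 0 := by
      simp [Nat.pow_mod, Nat.zero_pow (show 0 < i by omega)]
    rw [h0]
    norm_num

theorem F_one_pow {p : ℕ} (hp : p.Prime) (h3 : p % 3 = 1) (v : ℕ) : F (p ^ v) = v + 1 := by
  rw [F_apply, Nat.sum_divisors_prime_pow hp]
  have hone : ∀ i ∈ Finset.range (v + 1), chi (p ^ i) = 1 := by
    intro i _
    have h1 : p ^ i % 3 = 1 := by
      rw [Nat.pow_mod, h3, one_pow]
      norm_num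
    rw [chi_apply, h1, if_pos rfl]
  rw [Finset.sum_congr rfl hone]
  simp

theorem F_two_pow {p : ℕ} (hp : p.Prime) (h3 : p % 3 = 2) (v : ℕ) :
    F (p ^ v) = if Even v then 1 else 0 := by
  rw [F_apply, Nat.sum_divisors_prime_pow hp]
  have hmod : ∀ i, p ^ i % 3 = if Even i then 1 else 2 := by
    intro i
    induction i with
    | zero => simp
    | succ k ih =>
      rw [pow_succ, Nat.mul_mod, ih, h3]
      rcases Nat.even_or_odd k with h | h
      · rw [if_pos h, if_neg (by simp [Nat.even_add_one, h])]
      · rw [if_neg (by simp [Nat.not_even_iff_odd.mpr h]),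
          if_pos (by simp [Nat.even_add_one, Nat.not_even_iff_odd.mpr h])]
  have hchi : ∀ i ∈ Finset.range (v + 1), chi (p ^ i) = (-1 : ℤ) ^ i := by
    intro i _
    rcases Nat.even_or_odd i with h | h
    · have h1 : p ^ i % 3 = 1 := by rw [hmod i, if_pos h]
      rw [chi_apply, h1, if_pos rfl, (h.neg_one_pow : (-1 : ℤ) ^ i = 1)]
    · have h2 : p ^ i % 3 = 2 := by rw [hmod i, if_neg (Nat.not_even_iff_odd.mpr h)]
      rw [chi_apply, h2, (h.neg_one_pow : (-1 : ℤ) ^ i = -1)]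
      norm_num
  rw [Finset.sum_congr rfl hchi, neg_one_geom_sum]
  rcases Nat.even_or_odd v with h | h
  · rw [if_neg (by simp [Nat.even_add_one, h]), if_pos h]
  · rw [if_pos (Nat.even_add_one.mpr (Nat.not_even_iff_odd.mpr h)),
      if_neg (Nat.not_even_iff_odd.mpr h)]

end EisMain
namespace EisMain

open Finset

theorem main : ∀ n : ℕ, 0 < n → (Eis.A n : ℤ) = 6 * F n := by
  intro n
  induction n using Nat.strong_induction_on with
  | _ n ih =>
    intro hn
    by_cases hn1 : n = 1
    · subst hn1
      rw [Eis.A_one, F_mult.1]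
      norm_num
    · have h2 : 2 ≤ n := by omega
      set p := n.minFac with hpdef
      have hp : p.Prime := Nat.minFac_prime (by omega)
      have hpd : p ∣ n := Nat.minFac_dvd n
      set v := n.factorization p with hv
      set m := n / p ^ v with hmdef
      have hvm : p ^ v * m = n := Nat.ordProj_mul_ordCompl_eq_self n p
      have hm0 : 0 < m := Nat.ordCompl_pos p (by omega)
      have hmnd : ¬ p ∣ m := Nat.not_dvd_ordCompl hp (by omega)
      have hv1 : 0 < v := hp.factorization_pos_of_dvd (by omega) hpd
      have hmlt : m < n := by
        have hpv : 2 ≤ p ^ v := by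
          calc 2 ≤ p := hp.two_le
          _ ≤ p ^ v := Nat.le_self_pow (by omega) p
        have h2m : 2 * m ≤ p ^ v * m := Nat.mul_le_mul_right m hpv
        omega
      have hFm := ih m hmlt hm0
      have hcop : Nat.Coprime (p ^ v) m := (hp.coprime_iff_not_dvd.mpr hmnd).pow_left _
      have hFn : F n = F (p ^ v) * F m := by
        rw [← hvm]; exact F_mult.map_mul_of_coprime hcop
      have h3cases : p % 3 = 0 ∨ p % 3 = 1 ∨ p % 3 = 2 := by omega
      rcases h3cases with h3 | h3 | h3
      · -- ramified: p = 3
        have hp3 : p = 3 :=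
          ((Nat.prime_dvd_prime_iff_eq Nat.prime_three hp).mp
            (Nat.dvd_of_mod_eq_zero h3)).symm
        rw [hFn, hp3, F_three_pow, one_mul, ← hFm, ← hvm, hp3]
        rw [Eis.A_ramified v m (by omega)]
      · -- split
        obtain ⟨π, hπ⟩ := Eis.exists_norm_eq_prime hp h3
        have hna := Eis.not_dvd_conj hp h3 hπ
        rw [hFn, F_one_pow hp h3, ← hvm, Eis.A_split hp hπ hna m hmnd v]
        push_cast
        linear_combination (6 : ℤ) * (v + 1) * (F m) - ((v : ℤ) + 1) * (6 * F m)
          + ((v : ℤ) + 1) * hFm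
      · -- inert
        rcases Nat.even_or_odd v with hev | hod
        · obtain ⟨k, hk⟩ := hev
          have hk2 : v = 2 * k := by omega
          rw [hFn, F_two_pow hp h3, if_pos ⟨k, hk⟩, one_mul, ← hFm, ← hvm, hk2]
          rw [Eis.A_inert_even hp h3 k m hmnd]
        · rw [hFn, F_two_pow hp h3, if_neg (Nat.not_even_iff_odd.mpr hod), ← hvm]
          rw [Eis.A_inert_odd hp h3 v m hod hmnd]
          push_cast
          ring

end EisMain

/-- The number of representations of `n ≥ 1` as `x² + xy + y²` with `(x,y) ∈ ℤ²` equals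
`6·(#{d ∣ n, d ≡ 1 mod 3} - #{d ∣ n, d ≡ 2 mod 3})`. -/
theorem stmt_3 (n : ℕ) (hn : 0 < n) :
    (Nat.card {p : ℤ × ℤ // p.1 ^ 2 + p.1 * p.2 + p.2 ^ 2 = n} : ℤ) =
      6 * (((n.divisors.filter fun d => d % 3 = 1).card : ℤ)
            - ((n.divisors.filter fun d => d % 3 = 2).card : ℤ)) := by
  have hequiv : {p : ℤ × ℤ // p.1 ^ 2 + p.1 * p.2 + p.2 ^ 2 = (n : ℤ)} ≃
      {z : Eis // z.norm = (n : ℤ)} :=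
    { toFun := fun q => ⟨⟨q.1.1, q.1.2⟩, by
        have h := q.2
        simp only [Eis.norm]
        linear_combination h⟩
      invFun := fun z => ⟨(z.1.re, z.1.im), by
        have h := z.2
        simp only [Eis.norm] at h
        linear_combination h⟩
      left_inv := fun q => rfl
      right_inv := fun z => rfl }
  have hcard : Nat.card {p : ℤ × ℤ // p.1 ^ 2 + p.1 * p.2 + p.2 ^ 2 = (n : ℤ)} = Eis.A n :=
    Nat.card_congr hequiv
  rw [hcard, EisMain.main n hn]
  congr 1
  rw [EisMain.F_apply]
  have hsplit : ∀ d ∈ n.divisors, EisMain.chi d =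
      (if d % 3 = 1 then (1 : ℤ) else 0) - (if d % 3 = 2 then (1 : ℤ) else 0) := by
    intro d _
    rw [EisMain.chi_apply]
    have : d % 3 = 0 ∨ d % 3 = 1 ∨ d % 3 = 2 := by omega
    rcases this with h | h | h <;> rw [h] <;> norm_num
  rw [Finset.sum_congr rfl hsplit, Finset.sum_sub_distrib, Finset.sum_boole, Finset.sum_boole]
end

section
/- For every complex number q with |q| < 1, the Borwein theta functions satisfy a₀(q)³ = b₀(q)³ + c₀(q)³. -/
open Complex
open Complex

noncomputable def omega : ℂ := Complex.exp (2 * Real.pi * Complex.I / 3)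

/-- Borwein theta function `a₀(q) = ∑_{m,n ∈ ℤ} q^{m²+mn+n²}`. -/
noncomputable def a0 (q : ℂ) : ℂ :=
  ∑' p : ℤ × ℤ, q ^ (p.1 ^ 2 + p.1 * p.2 + p.2 ^ 2)

/-- Borwein theta function `b₀(q) = ∑_{m,n ∈ ℤ} ω^{m-n} q^{m²+mn+n²}`. -/
noncomputable def b0 (q : ℂ) : ℂ :=
  ∑' p : ℤ × ℤ, omega ^ (p.1 - p.2) * q ^ (p.1 ^ 2 + p.1 * p.2 + p.2 ^ 2)

/-- Borwein theta function
`c₀(q) = ∑_{m,n ∈ ℤ} q^{(m+1/3)²+(m+1/3)(n+1/3)+(n+1/3)²}` (principal powers). -/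
noncomputable def c0 (q : ℂ) : ℂ :=
  ∑' p : ℤ × ℤ, q ^ ((((p.1 : ℂ) + 1 / 3) ^ 2 + ((p.1 : ℂ) + 1 / 3) * ((p.2 : ℂ) + 1 / 3)
      + ((p.2 : ℂ) + 1 / 3) ^ 2 : ℂ))

namespace BorweinAux

abbrev X : Type := ℤ × ℤ × ℤ × ℤ × ℤ × ℤ
abbrev Z6 : Type := (ℤ × ℤ) × (ℤ × ℤ) × (ℤ × ℤ)

def Nf (p : ℤ × ℤ) : ℤ := p.1 ^ 2 + p.1 * p.2 + p.2 ^ 2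
def Kf (p : ℤ × ℤ) : ℤ := p.1 ^ 2 + p.1 * p.2 + p.2 ^ 2 + p.1 + p.2
def E6 (z : Z6) : ℤ := Nf z.1 + Nf z.2.1 + Nf z.2.2
def K6 (z : Z6) : ℤ := Kf z.1 + Kf z.2.1 + Kf z.2.2
def sig (z : Z6) : ℤ := z.1.1 - z.1.2 + z.2.1.1 - z.2.1.2 + z.2.2.1 - z.2.2.2

def Pmap (r : ℤ) : X → Z6 := fun (k, n1, m2, n2, m3, n3) =>
  ((3 * k + r + n1 - m2 + n2 - m3 + n3, n1), (m2, n2), (m3, n3))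

def EF : (Fin 3 × X) ≃ Z6 where
  toFun p := Pmap (p.1.1 : ℤ) p.2
  invFun z := (⟨(sig z % 3).toNat, by omega⟩,
     (sig z / 3, z.1.2, z.2.1.1, z.2.1.2, z.2.2.1, z.2.2.2))
  left_inv := by
    rintro ⟨⟨r, hr⟩, k, n1, m2, n2, m3, n3⟩
    simp only [Pmap, sig, Prod.mk.injEq, Fin.mk.injEq, and_true]
    omega
  right_inv := by
    rintro ⟨⟨m1, n1⟩, ⟨m2, n2⟩, m3, n3⟩
    simp only [Pmap, sig, Prod.mk.injEq, and_true]
    omega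

def rho : X ≃ X where
  toFun := fun (k, n1, m2, n2, m3, n3) =>
    (-1 - k, 3 * k + 1 + n1 - m2 + n2 - m3 + n3, n2, m2, n3, m3)
  invFun := fun (k, n1, m2, n2, m3, n3) =>
    (-1 - k, n1 + 3 * k + 2 + n2 - m2 + n3 - m3, n2, m2, n3, m3)
  left_inv := by
    rintro ⟨k, n1, m2, n2, m3, n3⟩; dsimp only; simp only [Prod.mk.injEq, and_true]; omega
  right_inv := by
    rintro ⟨k, n1, m2, n2, m3, n3⟩; dsimp only; simp only [Prod.mk.injEq, and_true]; omega

def Rs0 : X ≃ X where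
  toFun := fun (l, q1, p2, q2, p3, q3) =>
    (-1 - q1, 1 + l + q1 + q2 + q3, l + q2 - p3, l + q1 - p2, l - p2 + q3, l + q1 - p3)
  invFun := fun (k, n1, m2, n2, m3, n3) =>
    (2 + 3 * k + n1 - m2 + n2 - m3 + n3, -1 - k, 1 + 2 * k + n1 - m2 - m3 + n3,
     -1 - k + m2 - n3, 1 + 2 * k + n1 - m2 + n2 - m3, -1 - k - n2 + m3)
  left_inv := by
    rintro ⟨l, q1, p2, q2, p3, q3⟩; dsimp only; simp only [Prod.mk.injEq, and_true]; omega
  right_inv := by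
    rintro ⟨k, n1, m2, n2, m3, n3⟩; dsimp only; simp only [Prod.mk.injEq, and_true]; omega

def Rs1 : X ≃ X where
  toFun := fun (l, q1, p2, q2, p3, q3) =>
    (-2 - 3 * l - q1 + p2 - q2 + p3 - q3, 1 + l + q2 + q3, -1 - 2 * l - q1 + p2 - q3,
     l - p2, -1 - 2 * l - q1 - q2 + p3, l - p3)
  invFun := fun (k, n1, m2, n2, m3, n3) =>
    (1 + 2 * k + n1 - m2 + n2 - m3 + n3, -1 - k - n1 - n2 - n3, 1 + 2 * k + n1 - m2 - m3 + n3,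
     -1 - k + m2 - n3, 1 + 2 * k + n1 - m2 + n2 - m3, -1 - k - n2 + m3)
  left_inv := by
    rintro ⟨l, q1, p2, q2, p3, q3⟩; dsimp only; simp only [Prod.mk.injEq, and_true]; omega
  right_inv := by
    rintro ⟨k, n1, m2, n2, m3, n3⟩; dsimp only; simp only [Prod.mk.injEq, and_true]; omega

def Rs2 : X ≃ X where
  toFun := fun (l, q1, p2, q2, p3, q3) =>
    (2 + 3 * l + 2 * q1 - p2 + q2 - p3 + q3, -1 - 2 * l - q1 + p2 + p3,
     1 + l + q1 + q2 - p3, -2 - 2 * l - q1 - q2 + p3 - q3,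
     1 + l + q1 - p2 + q3, -2 - 2 * l - q1 + p2 - q2 - q3)
  invFun := fun (k, n1, m2, n2, m3, n3) =>
    (k - m2 - m3, 1 + 2 * k + n1 + n2 + n3, 1 + 2 * k + n1 - m2 - m3 + n3,
     -1 - k + m2 - n3, 1 + 2 * k + n1 - m2 + n2 - m3, -1 - k - n2 + m3)
  left_inv := by
    rintro ⟨l, q1, p2, q2, p3, q3⟩; dsimp only; simp only [Prod.mk.injEq, and_true]; omega
  right_inv := by
    rintro ⟨k, n1, m2, n2, m3, n3⟩; dsimp only; simp only [Prod.mk.injEq, and_true]; omega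

lemma swap_exp (x : X) : E6 (Pmap 1 x) = E6 (Pmap 2 (rho x)) := by
  obtain ⟨k, n1, m2, n2, m3, n3⟩ := x
  simp only [Pmap, rho, E6, Nf, Equiv.coe_fn_mk]
  ring

lemma c_exp0 (x : X) : 1 + K6 (Pmap 0 x) = E6 (Pmap 2 (Rs0 x)) := by
  obtain ⟨l, q1, p2, q2, p3, q3⟩ := x
  simp only [Pmap, Rs0, E6, K6, Nf, Kf, Equiv.coe_fn_mk]
  ring

lemma c_exp1 (x : X) : 1 + K6 (Pmap 1 x) = E6 (Pmap 2 (Rs1 x)) := by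
  obtain ⟨l, q1, p2, q2, p3, q3⟩ := x
  simp only [Pmap, Rs1, E6, K6, Nf, Kf, Equiv.coe_fn_mk]
  ring

lemma c_exp2 (x : X) : 1 + K6 (Pmap 2 x) = E6 (Pmap 2 (Rs2 x)) := by
  obtain ⟨l, q1, p2, q2, p3, q3⟩ := x
  simp only [Pmap, Rs2, E6, K6, Nf, Kf, Equiv.coe_fn_mk]
  ring

lemma sig_pmap (r : ℤ) (x : X) : sig (Pmap r x) = 3 * x.1 + r := by
  obtain ⟨k, n1, m2, n2, m3, n3⟩ := x
  simp only [Pmap, sig]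
  ring

/-! ### Summability -/

lemma summable_abs_int {s : ℝ} (h0 : 0 ≤ s) (h1 : s < 1) :
    Summable fun m : ℤ => s ^ m.natAbs := by
  apply Summable.of_nat_of_neg <;>
    simpa using summable_geometric_of_lt_one h0 h1

set_option maxHeartbeats 1000000 in
lemma summable_base {E : ℤ × ℤ → ℤ}
    (hE : ∀ p : ℤ × ℤ, ((p.1.natAbs : ℤ) + (p.2.natAbs : ℤ) ≤ 2 * E p + 1))
    {r : ℝ} (h0 : 0 < r) (h1 : r < 1) :
    Summable fun p : ℤ × ℤ => r ^ E p := by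
  have hs0 : 0 < Real.sqrt r := Real.sqrt_pos.mpr h0
  have hs1 : Real.sqrt r < 1 := by
    rw [show (1:ℝ) = Real.sqrt 1 by simp]
    exact Real.sqrt_lt_sqrt h0.le h1
  set s : ℝ := Real.sqrt r
  refine Summable.of_nonneg_of_le
    (f := fun p : ℤ × ℤ => s⁻¹ * (s ^ p.1.natAbs * s ^ p.2.natAbs))
    (fun p => zpow_nonneg h0.le _) ?_ ?_
  · intro p
    calc r ^ E p = s ^ (2 * E p) := by
          rw [zpow_mul, show s ^ (2:ℤ) = s ^ (2:ℕ) from zpow_natCast _ 2, sq,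
            Real.mul_self_sqrt h0.le]
      _ ≤ s ^ ((p.1.natAbs : ℤ) + (p.2.natAbs : ℤ) - 1) :=
          zpow_le_zpow_right_of_le_one₀ hs0 hs1.le (by linarith [hE p])
      _ = s⁻¹ * (s ^ p.1.natAbs * s ^ p.2.natAbs) := by
          rw [zpow_sub₀ hs0.ne', zpow_add₀ hs0.ne', zpow_natCast, zpow_natCast, zpow_one]
          ring
  · have hprod : Summable fun p : ℤ × ℤ => s ^ p.1.natAbs * s ^ p.2.natAbs :=
      Summable.mul_of_nonneg (summable_abs_int hs0.le hs1) (summable_abs_int hs0.le hs1)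
        (fun m => pow_nonneg hs0.le _) (fun m => pow_nonneg hs0.le _)
    exact hprod.mul_left _

lemma hNf_bound : ∀ p : ℤ × ℤ, ((p.1.natAbs : ℤ) + (p.2.natAbs : ℤ) ≤ 2 * Nf p + 1) := by
  rintro ⟨m, n⟩
  simp only [Nf]
  have h1 : (m.natAbs : ℤ) = |m| := (Int.abs_eq_natAbs m).symm
  have h2 : (n.natAbs : ℤ) = |n| := (Int.abs_eq_natAbs n).symm
  rw [h1, h2]
  nlinarith [sq_nonneg (m + n), sq_nonneg (|m| - 1), sq_nonneg (|n| - 1), _root_.sq_abs m, _root_.sq_abs n,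
    abs_nonneg m, abs_nonneg n]

lemma hKf_bound : ∀ p : ℤ × ℤ, ((p.1.natAbs : ℤ) + (p.2.natAbs : ℤ) ≤ 2 * Kf p + 1) := by
  rintro ⟨m, n⟩
  simp only [Kf]
  have h1 : (m.natAbs : ℤ) = |m| := (Int.abs_eq_natAbs m).symm
  have h2 : (n.natAbs : ℤ) = |n| := (Int.abs_eq_natAbs n).symm
  rw [h1, h2]
  nlinarith [sq_nonneg (m + n + 1), sq_nonneg (|m| - 1), sq_nonneg (|n| - 1), _root_.sq_abs m, _root_.sq_abs n,
    abs_nonneg m, abs_nonneg n]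

/-! ### facts about omega -/

lemma omega_ne_zero : omega ≠ 0 := Complex.exp_ne_zero _

lemma norm_omega : ‖omega‖ = 1 := by
  have h : 2 * (Real.pi : ℂ) * Complex.I / 3 = ((2 * Real.pi / 3 : ℝ) : ℂ) * Complex.I := by
    push_cast; ring
  rw [omega, h, Complex.norm_exp_ofReal_mul_I]

lemma omega_pow_three : omega ^ (3 : ℕ) = 1 := by
  rw [omega, ← Complex.exp_nat_mul]
  have h : ((3:ℕ) : ℂ) * (2 * Real.pi * Complex.I / 3) = 2 * Real.pi * Complex.I := by
    push_cast; ring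
  rw [h, Complex.exp_two_pi_mul_I]

lemma omega_ne_one : omega ≠ 1 := by
  intro hone
  rw [omega, Complex.exp_eq_one_iff] at hone
  obtain ⟨n, hn⟩ := hone
  have hne : (2 * (Real.pi : ℂ) * Complex.I) ≠ 0 := by
    simp [Real.pi_ne_zero, Complex.I_ne_zero]
  have h1 : (1 / 3 : ℂ) * (2 * Real.pi * Complex.I) = (n : ℂ) * (2 * Real.pi * Complex.I) := by
    rw [← hn]; ring
  have h2 : (1 / 3 : ℂ) = (n : ℂ) := mul_right_cancel₀ hne h1
  have h3 : ((3 * n : ℤ) : ℂ) = ((1 : ℤ) : ℂ) := by push_cast; rw [← h2]; norm_num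
  have h4 : (3 * n : ℤ) = 1 := Int.cast_injective h3
  omega

lemma omega_sum : 1 + omega + omega ^ 2 = 0 := by
  have h : (omega - 1) * (1 + omega + omega ^ 2) = omega ^ (3:ℕ) - 1 := by ring
  rw [omega_pow_three, sub_self] at h
  rcases mul_eq_zero.mp h with h' | h'
  · exact absurd (sub_eq_zero.mp h') omega_ne_one
  · exact h'

lemma omega_zpow_period (k r : ℤ) : omega ^ (3 * k + r) = omega ^ r := by
  rw [zpow_add₀ omega_ne_zero, zpow_mul, show omega ^ (3:ℤ) = omega ^ (3:ℕ) from
    zpow_natCast _ 3, omega_pow_three, one_zpow, one_mul]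

/-! ### the splitting lemma -/

lemma tsum_split (f : Z6 → ℂ) (hf : Summable f) :
    ∑' z : Z6, f z = (∑' x : X, f (Pmap 0 x)) + (∑' x : X, f (Pmap 1 x))
      + (∑' x : X, f (Pmap 2 x)) := by
  have hsum : Summable (fun c : Fin 3 × X => f (EF c)) := EF.summable_iff.mpr hf
  have hfib : ∀ b : Fin 3, Summable fun c : X => f (EF (b, c)) := by
    intro b
    have hinj : Function.Injective (fun c : X => EF (b, c)) := fun x y hxy =>
      ((Prod.mk.injEq _ _ _ _).mp (EF.injective hxy)).2
    exact Summable.comp_injective hf hinj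
  rw [← Equiv.tsum_eq EF f, Summable.tsum_prod' hsum hfib, tsum_fintype, Fin.sum_univ_three]
  norm_num [EF]

set_option maxHeartbeats 2000000 in
lemma cube_eq {f : ℤ × ℤ → ℂ} (hf : Summable fun p => ‖f p‖) :
    (∑' p : ℤ × ℤ, f p) ^ 3 = ∑' z : Z6, f z.1 * (f z.2.1 * f z.2.2) := by
  have h1 : (∑' p : ℤ × ℤ, f p) * (∑' p : ℤ × ℤ, f p)
      = ∑' z : (ℤ × ℤ) × (ℤ × ℤ), f z.1 * f z.2 :=
    tsum_mul_tsum_of_summable_norm hf hf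
  have h2 : (∑' p : ℤ × ℤ, f p) * (∑' z : (ℤ × ℤ) × (ℤ × ℤ), f z.1 * f z.2)
      = ∑' z : Z6, f z.1 * (f z.2.1 * f z.2.2) :=
    tsum_mul_tsum_of_summable_norm hf (hf.mul_norm hf)
  calc (∑' p : ℤ × ℤ, f p) ^ 3
      = (∑' p : ℤ × ℤ, f p) * ((∑' p : ℤ × ℤ, f p) * (∑' p : ℤ × ℤ, f p)) := by ring
    _ = ∑' z : Z6, f z.1 * (f z.2.1 * f z.2.2) := by rw [h1, h2]

set_option maxHeartbeats 800000 in
lemma cube_summable {f : ℤ × ℤ → ℂ} (hf : Summable fun p => ‖f p‖) :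
    Summable fun z : Z6 => f z.1 * (f z.2.1 * f z.2.2) := by
  have h := summable_mul_of_summable_norm (R := ℂ) (f := f)
    (g := fun z : (ℤ × ℤ) × (ℤ × ℤ) => f z.1 * f z.2) hf (hf.mul_norm hf)
  exact h

end BorweinAux

open BorweinAux in
/-- The Borweins' cubic identity `a₀(q)³ = b₀(q)³ + c₀(q)³` for `|q| < 1`. -/
theorem stmt_8 (q : ℂ) (hq : ‖q‖ < 1) :
    a0 q ^ 3 = b0 q ^ 3 + c0 q ^ 3 := by
  have hcast : ∀ p : ℤ × ℤ, (((p.1 : ℂ) + 1 / 3) ^ 2 + ((p.1 : ℂ) + 1 / 3) * ((p.2 : ℂ) + 1 / 3)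
      + ((p.2 : ℂ) + 1 / 3) ^ 2 : ℂ) = ((Kf p : ℤ) : ℂ) + 1 / 3 := by
    intro p; simp only [Kf]; push_cast; ring
  have hKf0 : ∀ p : ℤ × ℤ, 0 ≤ Kf p := by
    rintro ⟨m, n⟩; simp only [Kf]; nlinarith [sq_nonneg (m + n + 1), sq_nonneg m, sq_nonneg n]
  rcases eq_or_ne q 0 with rfl | hq0
  · -- the case q = 0
    have hNpos : ∀ p : ℤ × ℤ, p ≠ (0, 0) → p.1 ^ 2 + p.1 * p.2 + p.2 ^ 2 ≠ 0 := by
      rintro ⟨m, n⟩ hp h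
      have h4 : (2 * m + n) ^ 2 + 3 * n ^ 2 = 0 := by nlinarith [h]
      have h5 : n = 0 ∧ 2 * m + n = 0 := by
        constructor <;> nlinarith [sq_nonneg (2 * m + n), sq_nonneg n]
      exact hp (by simp only [Prod.mk.injEq]; omega)
    have ha : a0 0 = 1 := by
      rw [a0, tsum_eq_single ((0, 0) : ℤ × ℤ)]
      · norm_num
      · intro p hp
        exact zero_zpow _ (hNpos p hp)
    have hb : b0 0 = 1 := by
      rw [b0, tsum_eq_single ((0, 0) : ℤ × ℤ)]
      · norm_num
      · intro p hp
        rw [zero_zpow _ (hNpos p hp), mul_zero]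
    have hc : c0 0 = 0 := by
      rw [c0]
      have h0 : ∀ p : ℤ × ℤ, (0 : ℂ) ^ (((p.1 : ℂ) + 1 / 3) ^ 2
          + ((p.1 : ℂ) + 1 / 3) * ((p.2 : ℂ) + 1 / 3) + ((p.2 : ℂ) + 1 / 3) ^ 2 : ℂ) = 0 := by
        intro p
        apply Complex.zero_cpow
        rw [hcast p]
        have : (((Kf p : ℤ) : ℂ) + 1 / 3) = (((Kf p : ℝ) + 1 / 3 : ℝ) : ℂ) := by push_cast; ring
        rw [this]
        refine Complex.ofReal_ne_zero.mpr ?_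
        have : (0 : ℝ) ≤ (Kf p : ℝ) := by exact_mod_cast hKf0 p
        positivity
      rw [tsum_congr h0]
      exact tsum_zero
    rw [ha, hb, hc]
    norm_num
  · -- main case q ≠ 0
    have hr0 : 0 < ‖q‖ := norm_pos_iff.mpr hq0
    have SNn : Summable fun p : ℤ × ℤ => ‖q ^ Nf p‖ := by
      simpa only [norm_zpow] using summable_base hNf_bound hr0 hq
    have SKn : Summable fun p : ℤ × ℤ => ‖q ^ Kf p‖ := by
      simpa only [norm_zpow] using summable_base hKf_bound hr0 hq
    have SBn : Summable fun p : ℤ × ℤ => ‖omega ^ (p.1 - p.2) * q ^ Nf p‖ :=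
      SNn.congr fun p => by
        rw [norm_mul, norm_zpow, norm_zpow, norm_omega, one_zpow, one_mul]
    -- pointwise product identities
    have hptN : ∀ z : Z6, q ^ Nf z.1 * (q ^ Nf z.2.1 * q ^ Nf z.2.2) = q ^ E6 z := by
      intro z
      rw [← zpow_add₀ hq0, ← zpow_add₀ hq0]
      congr 1
      simp only [E6]; ring
    have hptK : ∀ z : Z6, q ^ Kf z.1 * (q ^ Kf z.2.1 * q ^ Kf z.2.2) = q ^ K6 z := by
      intro z
      rw [← zpow_add₀ hq0, ← zpow_add₀ hq0]
      congr 1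
      simp only [K6]; ring
    have hptB : ∀ z : Z6, (omega ^ (z.1.1 - z.1.2) * q ^ Nf z.1)
        * ((omega ^ (z.2.1.1 - z.2.1.2) * q ^ Nf z.2.1)
          * (omega ^ (z.2.2.1 - z.2.2.2) * q ^ Nf z.2.2))
        = omega ^ sig z * q ^ E6 z := by
      intro z
      have h1 : sig z = (z.1.1 - z.1.2) + ((z.2.1.1 - z.2.1.2) + (z.2.2.1 - z.2.2.2)) := by
        simp only [sig]; ring
      have h2 : E6 z = Nf z.1 + (Nf z.2.1 + Nf z.2.2) := by simp only [E6]; ring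
      rw [h1, h2, zpow_add₀ omega_ne_zero, zpow_add₀ omega_ne_zero, zpow_add₀ hq0,
        zpow_add₀ hq0]
      ring
    -- cube expansions
    have hcubeN : a0 q ^ 3 = ∑' z : Z6, q ^ E6 z := by
      rw [show a0 q = ∑' p : ℤ × ℤ, q ^ Nf p from rfl, cube_eq SNn]
      exact tsum_congr fun z => hptN z
    have hsumE6 : Summable fun z : Z6 => q ^ E6 z :=
      (cube_summable SNn).congr fun z => hptN z
    have hcubeK : (∑' p : ℤ × ℤ, q ^ Kf p) ^ 3 = ∑' z : Z6, q ^ K6 z := by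
      rw [cube_eq SKn]
      exact tsum_congr fun z => hptK z
    have hsumK6 : Summable fun z : Z6 => q ^ K6 z :=
      (cube_summable SKn).congr fun z => hptK z
    have hcubeB : b0 q ^ 3 = ∑' z : Z6, omega ^ sig z * q ^ E6 z := by
      rw [show b0 q = ∑' p : ℤ × ℤ, omega ^ (p.1 - p.2) * q ^ Nf p from rfl, cube_eq SBn]
      exact tsum_congr fun z => hptB z
    have hsumB6 : Summable fun z : Z6 => omega ^ sig z * q ^ E6 z :=
      (cube_summable SBn).congr fun z => hptB z
    -- split a0^3
    have eA : a0 q ^ 3 = (∑' x : X, q ^ E6 (Pmap 0 x)) + (∑' x : X, q ^ E6 (Pmap 1 x))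
        + (∑' x : X, q ^ E6 (Pmap 2 x)) := by
      rw [hcubeN]
      exact tsum_split _ hsumE6
    -- split b0^3
    have eB : b0 q ^ 3 = (∑' x : X, q ^ E6 (Pmap 0 x))
        + (omega * ∑' x : X, q ^ E6 (Pmap 1 x))
        + (omega ^ 2 * ∑' x : X, q ^ E6 (Pmap 2 x)) := by
      rw [hcubeB, tsum_split _ hsumB6]
      have hterm : ∀ (r : ℤ) (x : X), omega ^ sig (Pmap r x) * q ^ E6 (Pmap r x)
          = omega ^ r * q ^ E6 (Pmap r x) := by
        intro r x
        rw [sig_pmap, omega_zpow_period]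
      have t0 : (∑' x : X, omega ^ sig (Pmap 0 x) * q ^ E6 (Pmap 0 x))
          = ∑' x : X, q ^ E6 (Pmap 0 x) := by
        rw [tsum_congr (hterm 0)]
        simp only [zpow_zero, one_mul]
      have t1 : (∑' x : X, omega ^ sig (Pmap 1 x) * q ^ E6 (Pmap 1 x))
          = omega * ∑' x : X, q ^ E6 (Pmap 1 x) := by
        rw [tsum_congr (hterm 1), tsum_mul_left, zpow_one]
      have t2 : (∑' x : X, omega ^ sig (Pmap 2 x) * q ^ E6 (Pmap 2 x))
          = omega ^ 2 * ∑' x : X, q ^ E6 (Pmap 2 x) := by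
        rw [tsum_congr (hterm 2), tsum_mul_left,
          show (2 : ℤ) = ((2 : ℕ) : ℤ) by norm_num, zpow_natCast]
      rw [t0, t1, t2]
    -- swap: the r = 1 and r = 2 sums agree
    have eSwap : (∑' x : X, q ^ E6 (Pmap 1 x)) = ∑' x : X, q ^ E6 (Pmap 2 x) := by
      calc (∑' x : X, q ^ E6 (Pmap 1 x))
          = ∑' x : X, (fun y : X => q ^ E6 (Pmap 2 y)) (rho x) :=
            tsum_congr fun x => by rw [swap_exp]
        _ = ∑' y : X, q ^ E6 (Pmap 2 y) := Equiv.tsum_eq rho (fun y : X => q ^ E6 (Pmap 2 y))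
    -- c0 cubed
    have hc0eq : c0 q = q ^ ((1 : ℂ) / 3) * ∑' p : ℤ × ℤ, q ^ Kf p := by
      rw [c0, ← tsum_mul_left]
      refine tsum_congr fun p => ?_
      rw [hcast p, Complex.cpow_add _ _ hq0, Complex.cpow_intCast, mul_comm]
    have hcube13 : (q ^ ((1 : ℂ) / 3)) ^ 3 = q := by
      have h13 : (1 : ℂ) / 3 + (1 / 3 + 1 / 3) = 1 := by norm_num
      calc (q ^ ((1 : ℂ) / 3)) ^ 3
          = q ^ ((1 : ℂ) / 3) * (q ^ ((1 : ℂ) / 3) * q ^ ((1 : ℂ) / 3)) := by ring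
        _ = q ^ ((1 : ℂ) / 3 + (1 / 3 + 1 / 3)) := by
            rw [Complex.cpow_add _ _ hq0, Complex.cpow_add _ _ hq0]
        _ = q ^ (1 : ℂ) := by rw [h13]
        _ = q := Complex.cpow_one q
    have eC : c0 q ^ 3 = (∑' x : X, q ^ E6 (Pmap 2 x)) + (∑' x : X, q ^ E6 (Pmap 2 x))
        + (∑' x : X, q ^ E6 (Pmap 2 x)) := by
      have hKsum : Summable fun z : Z6 => q ^ (1 + K6 z) :=
        (hsumK6.mul_left q).congr fun z => by rw [zpow_add₀ hq0, zpow_one]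
      have step1 : c0 q ^ 3 = ∑' z : Z6, q ^ (1 + K6 z) := by
        rw [hc0eq, mul_pow, hcube13, hcubeK, ← tsum_mul_left]
        exact tsum_congr fun z => by rw [zpow_add₀ hq0, zpow_one]
      rw [step1, tsum_split _ hKsum]
      congr 1
      · congr 1
        · calc (∑' x : X, q ^ (1 + K6 (Pmap 0 x)))
              = ∑' x : X, (fun y : X => q ^ E6 (Pmap 2 y)) (Rs0 x) :=
                tsum_congr fun x => by rw [c_exp0]
            _ = ∑' y : X, q ^ E6 (Pmap 2 y) := Equiv.tsum_eq Rs0 (fun y : X => q ^ E6 (Pmap 2 y))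
        · calc (∑' x : X, q ^ (1 + K6 (Pmap 1 x)))
              = ∑' x : X, (fun y : X => q ^ E6 (Pmap 2 y)) (Rs1 x) :=
                tsum_congr fun x => by rw [c_exp1]
            _ = ∑' y : X, q ^ E6 (Pmap 2 y) := Equiv.tsum_eq Rs1 (fun y : X => q ^ E6 (Pmap 2 y))
      · calc (∑' x : X, q ^ (1 + K6 (Pmap 2 x)))
            = ∑' x : X, (fun y : X => q ^ E6 (Pmap 2 y)) (Rs2 x) :=
              tsum_congr fun x => by rw [c_exp2]
          _ = ∑' y : X, q ^ E6 (Pmap 2 y) := Equiv.tsum_eq Rs2 (fun y : X => q ^ E6 (Pmap 2 y))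
    -- put everything together
    rw [eA, eB, eC, eSwap]
    linear_combination (-(∑' x : X, q ^ E6 (Pmap 2 x))) * omega_sum
end
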